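/- arXiv:2108.05566 — 3 statements merged into one kernel-verified Lean document; each statement's English description precedes it below -/
import Mathlib

section
/- Let P(λ) = λ(J₁+R₁) + (J₂+R₂) be an n×n complex posH pencil. If the pencil λR₁ + R₂ is regular, i.e., det(μR₁ + R₂) ≠ 0 for some μ ∈ ℂ, then P(λ) is regular and has no eigenvalue on the positive real axis, i.e., det(α(J₁+R₁) + (J₂+R₂)) ≠ 0 for every real number α > 0. -/
open Matrix
open scoped ComplexOrder

lemma skew_quad_re {n : ℕ} (J : Matrix (Fin n) (Fin n) ℂ) (hJ : Jᴴ = -J)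
    (x : Fin n → ℂ) : (star x ⬝ᵥ J *ᵥ x).re = 0 := by
  set z := star x ⬝ᵥ J *ᵥ x with hz
  have hstar : star z = star x ⬝ᵥ Jᴴ *ᵥ x := by
    rw [hz, star_dotProduct, star_star, star_mulVec,
      ← dotProduct_mulVec]
  have h2 : star z = -z := by
    rw [hstar, hJ]
    simp [hz, neg_mulVec]
  have : z + star z = 0 := by rw [h2]; ring
  have := congrArg Complex.re this
  simp [Complex.add_re, Complex.conj_re] at this
  linarith [this]

/-- Corollary 3.8(ii): if the pencil `λR₁ + R₂` is regular, then the posH pencil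
`P(λ) = λ(J₁+R₁) + (J₂+R₂)` is regular and has no eigenvalues on the positive
real axis. -/
theorem posH_regular_of_hermitian_part_regular {n : ℕ}
    (J₁ J₂ R₁ R₂ : Matrix (Fin n) (Fin n) ℂ)
    (hJ₁ : J₁ᴴ = -J₁) (hJ₂ : J₂ᴴ = -J₂)
    (hR₁ : R₁.PosSemidef) (hR₂ : R₂.PosSemidef)
    (hreg : ∃ μ : ℂ, (μ • R₁ + R₂).det ≠ 0) :
    (∃ μ : ℂ, (μ • (J₁ + R₁) + (J₂ + R₂)).det ≠ 0) ∧
    (∀ α : ℝ, 0 < α → ((α : ℂ) • (J₁ + R₁) + (J₂ + R₂)).det ≠ 0) := by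
  obtain ⟨μ, hμ⟩ := hreg
  have main : ∀ α : ℝ, 0 < α → ((α : ℂ) • (J₁ + R₁) + (J₂ + R₂)).det ≠ 0 := by
    intro α hα hdet
    obtain ⟨x, hx0, hx⟩ := (Matrix.exists_mulVec_eq_zero_iff).mpr hdet
    -- quadratic form is zero
    have hq : star x ⬝ᵥ ((α : ℂ) • (J₁ + R₁) + (J₂ + R₂)) *ᵥ x = 0 := by
      rw [hx, dotProduct_zero]
    have hexp : (α : ℂ) * (star x ⬝ᵥ J₁ *ᵥ x) + (α : ℂ) * (star x ⬝ᵥ R₁ *ᵥ x)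
        + (star x ⬝ᵥ J₂ *ᵥ x) + (star x ⬝ᵥ R₂ *ᵥ x) = 0 := by
      rw [← hq]
      simp [add_mulVec, smul_mulVec, dotProduct_add, dotProduct_smul,
        smul_eq_mul]
      ring
    have hre := congrArg Complex.re hexp
    have hr1 : 0 ≤ (star x ⬝ᵥ R₁ *ᵥ x).re ∧ (star x ⬝ᵥ R₁ *ᵥ x).im = 0 := by
      have := hR₁.dotProduct_mulVec_nonneg x
      rw [Complex.le_def] at this
      constructor
      · simpa using this.1
      · simpa using this.2.symm
    have hr2 : 0 ≤ (star x ⬝ᵥ R₂ *ᵥ x).re ∧ (star x ⬝ᵥ R₂ *ᵥ x).im = 0 := by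
      have := hR₂.dotProduct_mulVec_nonneg x
      rw [Complex.le_def] at this
      constructor
      · simpa using this.1
      · simpa using this.2.symm
    have hj1 := skew_quad_re J₁ hJ₁ x
    have hj2 := skew_quad_re J₂ hJ₂ x
    simp [Complex.add_re, Complex.mul_re, Complex.ofReal_re, Complex.ofReal_im,
      hj1, hj2] at hre
    -- hre : α * (re R₁-form) + re R₂-form = 0 (modulo im terms)
    have him1 : (star x ⬝ᵥ J₁ *ᵥ x).im = 0 ∨ True := Or.inr trivial
    have h1 : (star x ⬝ᵥ R₁ *ᵥ x).re = 0 ∧ (star x ⬝ᵥ R₂ *ᵥ x).re = 0 := by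
      constructor <;> nlinarith [hr1.1, hr2.1, hre]
    have hz1 : star x ⬝ᵥ R₁ *ᵥ x = 0 := by
      apply Complex.ext <;> simp [h1.1, hr1.2]
    have hz2 : star x ⬝ᵥ R₂ *ᵥ x = 0 := by
      apply Complex.ext <;> simp [h1.2, hr2.2]
    have hm1 : R₁ *ᵥ x = 0 := (hR₁.dotProduct_mulVec_zero_iff x).mp hz1
    have hm2 : R₂ *ᵥ x = 0 := (hR₂.dotProduct_mulVec_zero_iff x).mp hz2
    have : (μ • R₁ + R₂) *ᵥ x = 0 := by
      rw [add_mulVec, smul_mulVec, hm1, hm2]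
      simp
    exact hμ (Matrix.exists_mulVec_eq_zero_iff.mp ⟨x, hx0, this⟩)
  exact ⟨⟨(1 : ℂ), by simpa using main 1 one_pos⟩, main⟩
end

section
/- Let P(λ) = λ(J₁+R₁) + (J₂+R₂) be an n×n complex posH pencil. If P(λ) has no common isotropic vector, i.e., there is no nonzero x ∈ ℂⁿ with x*(J₁+R₁)x = 0 and x*(J₂+R₂)x = 0, then P(λ) is regular: det(λ₀(J₁+R₁) + (J₂+R₂)) ≠ 0 for some λ₀ ∈ ℂ. -/
open Matrix Polynomial
open scoped ComplexOrder

lemma skew_re_aux {n : ℕ} (J : Matrix (Fin n) (Fin n) ℂ) (hJ : Jᴴ = -J) (x : Fin n → ℂ) :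
    (star x ⬝ᵥ (J *ᵥ x)).re = 0 := by
  have h : star (star x ⬝ᵥ (J *ᵥ x)) = star x ⬝ᵥ (Jᴴ *ᵥ x) := by
    rw [star_dotProduct, star_star, star_mulVec, ← dotProduct_mulVec]
  rw [hJ] at h
  have h2 : star (star x ⬝ᵥ (J *ᵥ x)) = -(star x ⬝ᵥ (J *ᵥ x)) := by
    rw [h]; simp [Matrix.neg_mulVec]
  have := congrArg Complex.re h2
  simp only [Complex.star_def, Complex.conj_re, Complex.neg_re] at this
  linarith

/-- Theorem 4.5, (d) ⇒ (e): if a posH pencil `P(λ) = λ(J₁+R₁) + (J₂+R₂)` has no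
common isotropic vector, then it is regular. -/
theorem posH_regular_of_no_common_isotropic {n : ℕ}
    (J₁ J₂ R₁ R₂ : Matrix (Fin n) (Fin n) ℂ)
    (hJ₁ : J₁ᴴ = -J₁) (hJ₂ : J₂ᴴ = -J₂)
    (hR₁ : R₁.PosSemidef) (hR₂ : R₂.PosSemidef)
    (hiso : ¬ ∃ x : Fin n → ℂ, x ≠ 0 ∧
      star x ⬝ᵥ ((J₁ + R₁) *ᵥ x) = 0 ∧ star x ⬝ᵥ ((J₂ + R₂) *ᵥ x) = 0) :
    ∃ μ : ℂ, (μ • (J₁ + R₁) + (J₂ + R₂)).det ≠ 0 := by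
  classical
  by_contra hcon
  push_neg at hcon
  set A := J₁ + R₁ with hA
  set B := J₂ + R₂ with hB
  -- polynomial pencil
  set M : Matrix (Fin n) (Fin n) (Polynomial ℂ) :=
    Matrix.of (fun i j => C (A i j) * X + C (B i j)) with hM
  have hmap : ∀ μ : ℂ, M.map (eval μ) = μ • A + B := by
    intro μ; ext i j
    simp only [hM, Matrix.map_apply, Matrix.of_apply, eval_add, eval_mul, eval_C, eval_X,
      Matrix.add_apply, Matrix.smul_apply, smul_eq_mul]
    ring
  have hdet : M.det = 0 := by
    apply Polynomial.zero_of_eval_zero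
    intro μ
    have : (evalRingHom μ) M.det = (M.map (evalRingHom μ)).det := RingHom.map_det _ _
    simpa [hmap μ, hcon μ] using this
  obtain ⟨v, hv, hMv⟩ := Matrix.exists_mulVec_eq_zero_iff.mpr hdet
  -- normalize so that evaluation at I is nonzero
  set S : Finset (Fin n) := Finset.univ.filter (fun j => v j ≠ 0) with hS
  have hSne : S.Nonempty := by
    obtain ⟨j, hj⟩ := Function.ne_iff.mp hv
    exact ⟨j, Finset.mem_filter.mpr ⟨Finset.mem_univ _, hj⟩⟩
  set k : ℕ := S.inf' hSne (fun j => rootMultiplicity Complex.I (v j)) with hk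
  have hdvd : ∀ j, (X - C Complex.I) ^ k ∣ v j := by
    intro j
    by_cases hj : v j = 0
    · simp [hj]
    · refine dvd_trans (pow_dvd_pow _ ?_) (pow_rootMultiplicity_dvd (v j) Complex.I)
      exact Finset.inf'_le _ (by simp [hS, hj])
  choose w hw using hdvd
  have hpow : (X - C Complex.I) ^ k ≠ 0 := pow_ne_zero _ (X_sub_C_ne_zero _)
  have hMw : M *ᵥ w = 0 := by
    funext j
    have h0 := congrFun hMv j
    have : (M *ᵥ v) j = (X - C Complex.I) ^ k * (M *ᵥ w) j := by
      simp only [mulVec, dotProduct, Finset.mul_sum]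
      refine Finset.sum_congr rfl fun l _ => ?_
      rw [hw l]; ring
    rw [this] at h0
    have := mul_eq_zero.mp h0
    simpa [hpow] using this
  -- the distinguished index
  obtain ⟨j₀, hj₀S, hj₀⟩ := Finset.exists_mem_eq_inf' hSne (fun j => rootMultiplicity Complex.I (v j))
  have hvj₀ : v j₀ ≠ 0 := by simpa [hS] using hj₀S
  have hwj₀ : w j₀ ≠ 0 := by
    intro h; apply hvj₀; rw [hw j₀, h, mul_zero]
  have hevI : (w j₀).eval Complex.I ≠ 0 := by
    intro hroot
    have hmul : rootMultiplicity Complex.I (v j₀) =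
        rootMultiplicity Complex.I ((X - C Complex.I) ^ k) +
        rootMultiplicity Complex.I (w j₀) := by
      rw [hw j₀] at hvj₀ ⊢
      exact rootMultiplicity_mul hvj₀
    rw [rootMultiplicity_X_sub_C_pow] at hmul
    have hkv : k = rootMultiplicity Complex.I (v j₀) := hj₀
    have : rootMultiplicity Complex.I (w j₀) = 0 := by omega
    have hpos : 0 < rootMultiplicity Complex.I (w j₀) :=
      (rootMultiplicity_pos hwj₀).mpr hroot
    omega
  -- evaluation identity
  have key : ∀ μ : ℂ, (μ • A + B) *ᵥ (fun j => (w j).eval μ) = 0 := by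
    intro μ
    funext j
    have h0 := congrFun hMw j
    have : Polynomial.eval μ ((M *ᵥ w) j) = ((μ • A + B) *ᵥ (fun j => (w j).eval μ)) j := by
      simp only [mulVec, dotProduct, hM, Matrix.of_apply, eval_finset_sum, eval_mul, eval_add,
        eval_C, eval_X, Matrix.add_apply, Matrix.smul_apply, smul_eq_mul]
      refine Finset.sum_congr rfl fun l _ => ?_
      ring
    rw [h0] at this
    simpa using this.symm
  -- values of quadratic forms
  set xt : ℂ → (Fin n → ℂ) := fun μ j => (w j).eval μ with hxt
  -- for real positive t, R-parts vanish
  have hRvanish : ∀ (R : Matrix (Fin n) (Fin n) ℂ), R.PosSemidef →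
      (∀ t : ℝ, 0 < t → R *ᵥ (xt t) = 0) → R *ᵥ (xt Complex.I) = 0 := by
    intro R hR hRt
    funext j
    have hpoly : ∀ μ : ℂ, (R *ᵥ (xt μ)) j = Polynomial.eval μ (∑ l, C (R j l) * w l) := by
      intro μ; simp [mulVec, dotProduct, hxt, eval_finset_sum]
    have hzero : (∑ l, C (R j l) * w l) = 0 := by
      apply Polynomial.eq_zero_of_infinite_isRoot
      apply Set.Infinite.mono (s := (fun t : ℝ => (t : ℂ)) '' (Set.Ioi 0))
      · rintro z ⟨t, ht, rfl⟩
        have := congrFun (hRt t ht) j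
        rw [hpoly t] at this
        exact this
      · exact Set.Infinite.image (Set.injOn_of_injective Complex.ofReal_injective)
          (Set.Ioi_infinite 0)
    rw [hpoly, hzero]
    simp
  have hRt : ∀ t : ℝ, 0 < t → R₁ *ᵥ (xt t) = 0 ∧ R₂ *ᵥ (xt t) = 0 := by
    intro t ht
    set x := xt t with hx
    have hk := key (t : ℂ)
    have hq : (t : ℂ) * (star x ⬝ᵥ (A *ᵥ x)) + star x ⬝ᵥ (B *ᵥ x) = 0 := by
      have := congrArg (fun v => star x ⬝ᵥ v) hk
      simpa [Matrix.add_mulVec, Matrix.smul_mulVec, dotProduct_add, dotProduct_smul,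
        smul_eq_mul] using this
    -- real parts
    have hreA : (star x ⬝ᵥ (A *ᵥ x)).re = (star x ⬝ᵥ (R₁ *ᵥ x)).re := by
      rw [hA, Matrix.add_mulVec, dotProduct_add]
      simp [Complex.add_re, skew_re_aux J₁ hJ₁ x]
    have hreB : (star x ⬝ᵥ (B *ᵥ x)).re = (star x ⬝ᵥ (R₂ *ᵥ x)).re := by
      rw [hB, Matrix.add_mulVec, dotProduct_add]
      simp [Complex.add_re, skew_re_aux J₂ hJ₂ x]
    have h1 : (0:ℂ) ≤ star x ⬝ᵥ (R₁ *ᵥ x) := hR₁.dotProduct_mulVec_nonneg x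
    have h2 : (0:ℂ) ≤ star x ⬝ᵥ (R₂ *ᵥ x) := hR₂.dotProduct_mulVec_nonneg x
    rw [Complex.le_def] at h1 h2
    simp only [Complex.zero_re, Complex.zero_im] at h1 h2
    have hre := congrArg Complex.re hq
    simp only [Complex.add_re, Complex.mul_re, Complex.ofReal_re, Complex.ofReal_im,
      Complex.zero_re, zero_mul, sub_zero] at hre
    rw [hreA, hreB] at hre
    have hr1 : (star x ⬝ᵥ (R₁ *ᵥ x)).re = 0 := by nlinarith [h1.1, h2.1, hre]
    have hr2 : (star x ⬝ᵥ (R₂ *ᵥ x)).re = 0 := by nlinarith [h1.1, h2.1, hre]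
    constructor
    · rw [← hR₁.dotProduct_mulVec_zero_iff x]
      exact Complex.ext (by simpa using hr1) (by simpa using h1.2.symm)
    · rw [← hR₂.dotProduct_mulVec_zero_iff x]
      exact Complex.ext (by simpa using hr2) (by simpa using h2.2.symm)
  -- now at μ = I
  set y := xt Complex.I with hy
  have hyne : y ≠ 0 := by
    intro h
    exact hevI (by simpa [hy, hxt] using congrFun h j₀)
  have hR1y : R₁ *ᵥ y = 0 := hRvanish R₁ hR₁ (fun t ht => (hRt t ht).1)
  have hR2y : R₂ *ᵥ y = 0 := hRvanish R₂ hR₂ (fun t ht => (hRt t ht).2)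
  have hJy : Complex.I • (J₁ *ᵥ y) + J₂ *ᵥ y = 0 := by
    have hk := key Complex.I
    rw [hA, hB] at hk
    have : Complex.I • ((J₁ + R₁) *ᵥ y) + (J₂ + R₂) *ᵥ y = 0 := by
      simpa [Matrix.add_mulVec, Matrix.smul_mulVec] using hk
    rw [Matrix.add_mulVec, Matrix.add_mulVec, hR1y, hR2y] at this
    simpa using this
  have hq : Complex.I * (star y ⬝ᵥ (J₁ *ᵥ y)) + star y ⬝ᵥ (J₂ *ᵥ y) = 0 := by
    have := congrArg (fun v => star y ⬝ᵥ v) hJy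
    simpa [dotProduct_add, dotProduct_smul, smul_eq_mul] using this
  have ha : (star y ⬝ᵥ (J₁ *ᵥ y)).re = 0 := skew_re_aux J₁ hJ₁ y
  have hb : (star y ⬝ᵥ (J₂ *ᵥ y)).re = 0 := skew_re_aux J₂ hJ₂ y
  have hre := congrArg Complex.re hq
  have him := congrArg Complex.im hq
  simp only [Complex.add_re, Complex.mul_re, Complex.I_re, Complex.I_im, Complex.add_im,
    Complex.mul_im, Complex.zero_re, Complex.zero_im, zero_mul, one_mul, zero_sub, zero_add] at hre him
  have hq1 : star y ⬝ᵥ (J₁ *ᵥ y) = 0 :=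
    Complex.ext (by simpa using ha) (by simp only [Complex.zero_im]; linarith [hre, hb])
  have hq2 : star y ⬝ᵥ (J₂ *ᵥ y) = 0 :=
    Complex.ext (by simpa using hb) (by simp only [Complex.zero_im]; linarith [him, ha])
  apply hiso
  refine ⟨y, hyne, ?_, ?_⟩
  · rw [Matrix.add_mulVec, dotProduct_add, hq1, hR1y]; simp
  · rw [Matrix.add_mulVec, dotProduct_add, hq2, hR2y]; simp
end

section
/- Let P(λ) = λ(J₁+R₁) + (J₂+R₂) be an n×n complex posH pencil such that for every x ∈ ℂⁿ the real number −(x*R₁x)(x*R₂x) + (x*J₁x)(x*J₂x) is ≤ 0, and such that P(λ) has no common isotropic vector, i.e., there is no nonzero x ∈ ℂⁿ with x*(J₁+R₁)x = 0 and x*(J₂+R₂)x = 0. Then the numerical range of P(λ) is contained in the closed left half-plane: whenever μ ∈ ℂ and x ∈ ℂⁿ is nonzero with x*(μ(J₁+R₁) + (J₂+R₂))x = 0, one has Re μ ≤ 0. -/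
open Matrix
open scoped ComplexOrder

lemma star_quad {n : ℕ} (A : Matrix (Fin n) (Fin n) ℂ) (x : Fin n → ℂ) :
    star (star x ⬝ᵥ (A *ᵥ x)) = star x ⬝ᵥ (Aᴴ *ᵥ x) := by
  rw [← star_dotProduct_star, star_mulVec, star_star, dotProduct_mulVec]

/-- Theorem 4.15(a): let `P(λ) = λ(J₁+R₁) + (J₂+R₂)` be a posH pencil such that
`-(x*R₁x)(x*R₂x) + (x*J₁x)(x*J₂x) ≤ 0` for all `x` and such that `P(λ)` has no
common isotropic vector. Then the numerical range of `P(λ)` is contained in the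
closed left half-plane. -/
theorem posH_numrange_left_half_plane_of_no_isotropic {n : ℕ}
    (J₁ J₂ R₁ R₂ : Matrix (Fin n) (Fin n) ℂ)
    (hJ₁ : J₁ᴴ = -J₁) (hJ₂ : J₂ᴴ = -J₂)
    (hR₁ : R₁.PosSemidef) (hR₂ : R₂.PosSemidef)
    (hcond : ∀ x : Fin n → ℂ,
      (-(star x ⬝ᵥ (R₁ *ᵥ x)) * (star x ⬝ᵥ (R₂ *ᵥ x)) +
        (star x ⬝ᵥ (J₁ *ᵥ x)) * (star x ⬝ᵥ (J₂ *ᵥ x))).re ≤ 0)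
    (hiso : ¬ ∃ x : Fin n → ℂ, x ≠ 0 ∧
      star x ⬝ᵥ ((J₁ + R₁) *ᵥ x) = 0 ∧ star x ⬝ᵥ ((J₂ + R₂) *ᵥ x) = 0) :
    ∀ (μ : ℂ) (x : Fin n → ℂ), x ≠ 0 →
      star x ⬝ᵥ ((μ • (J₁ + R₁) + (J₂ + R₂)) *ᵥ x) = 0 → μ.re ≤ 0 := by
  intro μ x hx heq
  set j₁ := star x ⬝ᵥ (J₁ *ᵥ x) with hj₁def
  set j₂ := star x ⬝ᵥ (J₂ *ᵥ x) with hj₂def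
  set a₁ := star x ⬝ᵥ (R₁ *ᵥ x) with ha₁def
  set a₂ := star x ⬝ᵥ (R₂ *ᵥ x) with ha₂def
  -- imaginary parts of a's are zero, re ≥ 0
  have ha₁ : 0 ≤ a₁ := hR₁.dotProduct_mulVec_nonneg x
  have ha₂ : 0 ≤ a₂ := hR₂.dotProduct_mulVec_nonneg x
  rw [Complex.le_def] at ha₁ ha₂
  have ha₁im : a₁.im = 0 := by simpa using ha₁.2.symm
  have ha₂im : a₂.im = 0 := by simpa using ha₂.2.symm
  -- real parts of j's are zero
  have hj₁re : j₁.re = 0 := by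
    have := star_quad J₁ x
    rw [hJ₁] at this
    have : (starRingEnd ℂ) j₁ = -j₁ := by
      simpa [hj₁def, Matrix.neg_mulVec] using this
    have h2 := congrArg Complex.re this
    simp at h2; linarith
  have hj₂re : j₂.re = 0 := by
    have := star_quad J₂ x
    rw [hJ₂] at this
    have : (starRingEnd ℂ) j₂ = -j₂ := by
      simpa [hj₂def, Matrix.neg_mulVec] using this
    have h2 := congrArg Complex.re this
    simp at h2; linarith
  -- the equation: μ * (j₁ + a₁) + (j₂ + a₂) = 0
  have heq' : μ * (j₁ + a₁) + (j₂ + a₂) = 0 := by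
    have : star x ⬝ᵥ ((μ • (J₁ + R₁) + (J₂ + R₂)) *ᵥ x)
        = μ * (j₁ + a₁) + (j₂ + a₂) := by
      simp [Matrix.add_mulVec, Matrix.smul_mulVec, dotProduct_add,
        dotProduct_smul, smul_eq_mul]
      ring
    rw [this] at heq; exact heq
  -- c₁ ≠ 0
  have hc₁ : j₁ + a₁ ≠ 0 := by
    intro h0
    apply hiso
    refine ⟨x, hx, ?_, ?_⟩
    · simpa [Matrix.add_mulVec, dotProduct_add, hj₁def, ha₁def] using h0
    · have : j₂ + a₂ = 0 := by
        rw [h0, mul_zero, zero_add] at heq'; exact heq'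
      simpa [Matrix.add_mulVec, dotProduct_add, hj₂def, ha₂def] using this
  -- pass to real coordinates
  have hcond' := hcond x
  rw [← hj₁def, ← hj₂def, ← ha₁def, ← ha₂def] at hcond'
  have hcondre : -(a₁.re * a₂.re) - j₁.im * j₂.im ≤ 0 := by
    simp [Complex.add_re, Complex.mul_re, Complex.neg_re, Complex.neg_im,
      ha₁im, ha₂im, hj₁re, hj₂re] at hcond'
    linarith
  have hre := congrArg Complex.re heq'
  have him := congrArg Complex.im heq'
  simp [Complex.add_re, Complex.add_im, Complex.mul_re, Complex.mul_im,
    hj₁re, hj₂re, ha₁im, ha₂im] at hre him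
  -- c₁ ≠ 0 in real terms
  have hc₁' : 0 < a₁.re ^ 2 + j₁.im ^ 2 := by
    rcases lt_or_eq_of_le (by positivity : (0:ℝ) ≤ a₁.re ^ 2 + j₁.im ^ 2) with h | h
    · exact h
    · exfalso
      apply hc₁
      have h1 : a₁.re = 0 ∧ j₁.im = 0 := by
        constructor <;> nlinarith [sq_nonneg a₁.re, sq_nonneg j₁.im]
      apply Complex.ext <;> simp [hj₁re, ha₁im, h1.1, h1.2]
  have hkey : μ.re * (a₁.re ^ 2 + j₁.im ^ 2) = -(a₂.re * a₁.re + j₂.im * j₁.im) := by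
    linear_combination a₁.re * hre + j₁.im * him
  nlinarith [hcondre, hc₁', hkey]
end
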